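/- Let (S,U) be a well-formed pair for hypergraph H with edge weight γ. Let S* = {S ∈ S : γ(S) < 1}, where γ(S) = ∑_{e ∈ S} γ(e). Then the optimal value of the linear program LP(S,U) is at most weight(γ) + ∑_{S ∈ S*} (1 − γ(S)). -/

import Mathlib

open scoped Classical

/-- Let `(S,U)` be a well-formed pair for a hypergraph `H = (V,E)` with edge
weight function `γ`, with a set `A` of witnessing representatives. Let
`S* = {Si ∈ S : γ(Si) < 1}`. Then the optimal value of `LP(S,U)` is at most
`weight(γ) + ∑_{Si ∈ S*} (1 - γ(Si))`. -/
theorem stmt_10 {V : Type} [Fintype V] [DecidableEq V]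
    (c : ℕ)
    (E : Finset (Finset V)) (hE : ∀ e ∈ E, e.Nonempty)
    (γ : Finset V → ℝ)
    (hγ : ∀ e ∈ E, 0 ≤ γ e ∧ γ e ≤ 1) (hγE : ∀ e ∉ E, γ e = 0)
    (S : Finset (Finset (Finset V))) (U : Finset V)
    (B : Finset V)
    (hB : B = Finset.univ.filter fun v : V => 1 ≤ ∑ e ∈ E.filter (v ∈ ·), γ e)
    (hU : U ⊆ B)
    (hS : ∀ Si ∈ S, Si ⊆ E ∧ Si.card ≤ c)
    (hcover : ∀ v ∈ B, v ∉ U → ∃ Si ∈ S, ∀ e ∈ Si, v ∈ e)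
    (A : Finset (Finset V))
    (hA1 : A ⊆ E)
    (hA2 : ∀ a ∈ A, a ∉ S.sup id ∧ (a ∩ U).Nonempty)
    (hA3 : ∀ e ∈ E, e ∉ S.sup id → (e ∩ U).Nonempty → ∃ a ∈ A, a ∩ U = e ∩ U)
    (hA4 : ∀ a ∈ A, ∀ a' ∈ A, a ∩ U = a' ∩ U → a = a')
    (opt : ℝ)
    (hopt : IsGLB {w : ℝ |
      ∃ x : Finset V → ℝ,
        (∀ e, 0 ≤ x e) ∧ (∀ e ∉ S.sup id ∪ A, x e = 0) ∧
        (∀ Si ∈ S, 1 ≤ ∑ e ∈ Si, x e) ∧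
        (∀ u ∈ U, 1 ≤ ∑ e ∈ (S.sup id ∪ A).filter (u ∈ ·), x e) ∧
        w = ∑ e ∈ S.sup id ∪ A, x e} opt) :
    opt ≤ (∑ e ∈ E, γ e)
      + ∑ Si ∈ S.filter (fun Si => ∑ e ∈ Si, γ e < 1), (1 - ∑ e ∈ Si, γ e) := by
  classical
  by_cases hne : ∀ Si ∈ S, Si.Nonempty
  · -- main case: build a feasible solution
    set sup := S.sup id with hsupdef
    have hsupE : sup ⊆ E := by
      intro e he
      rw [Finset.mem_sup] at he
      obtain ⟨Si, hSi, he⟩ := he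
      exact (hS Si hSi).1 he
    have hSisup : ∀ Si ∈ S, Si ⊆ sup := by
      intro Si hSi e he
      rw [Finset.mem_sup]
      exact ⟨Si, hSi, he⟩
    have h0 : ∀ e ∈ E, 0 ≤ γ e := fun e he => (hγ e he).1
    -- pick an element of each Si
    set pick : Finset (Finset V) → Finset V :=
      fun Si => if h : Si.Nonempty then h.choose else ∅ with hpickdef
    have hpick : ∀ Si ∈ S, pick Si ∈ Si := by
      intro Si hSi
      have h := hne Si hSi
      simp only [hpickdef, dif_pos h]
      exact h.choose_spec
    set Sdef := S.filter (fun Si => ∑ e ∈ Si, γ e < 1) with hSdefdef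
    set boost : Finset V → ℝ :=
      fun e => ∑ Si ∈ Sdef, if pick Si = e then 1 - ∑ f ∈ Si, γ f else 0 with hboostdef
    have hboost0 : ∀ e, 0 ≤ boost e := by
      intro e
      apply Finset.sum_nonneg
      intro Si hSi
      rw [hSdefdef, Finset.mem_filter] at hSi
      split <;> linarith [hSi.2]
    set fib : Finset V → Finset (Finset V) :=
      fun a => E.filter (fun e => e ∉ sup ∧ e ∩ U = a ∩ U) with hfibdef
    set x : Finset V → ℝ :=
      fun e => if e ∈ sup then γ e + boost e
        else if e ∈ A then ∑ f ∈ fib e, γ f else 0 with hxdef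
    have hAsup : ∀ a ∈ A, a ∉ sup := fun a ha => (hA2 a ha).1
    have hdisj : Disjoint sup A := Finset.disjoint_right.mpr hAsup
    have hxsup : ∀ e ∈ sup, x e = γ e + boost e := by
      intro e he; simp only [hxdef, if_pos he]
    have hxA : ∀ a ∈ A, x a = ∑ f ∈ fib a, γ f := by
      intro a ha; simp only [hxdef, if_neg (hAsup a ha), if_pos ha]
    -- fibers are pairwise disjoint over A
    have hfibdisj : ∀ a ∈ A, ∀ a' ∈ A, a ≠ a' → Disjoint (fib a) (fib a') := by
      intro a ha a' ha' hne'
      rw [Finset.disjoint_left]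
      intro e he he'
      rw [hfibdef, Finset.mem_filter] at he he'
      exact hne' (hA4 a ha a' ha' (he.2.2 ▸ he'.2.2.symm ▸ rfl))
    have hfibE : ∀ a, fib a ⊆ E := fun a => Finset.filter_subset _ _
    -- the sum over A equals a sum over a biUnion
    have hsumA : ∀ (T : Finset (Finset V)), T ⊆ A →
        ∑ a ∈ T, x a = ∑ e ∈ T.biUnion fib, γ e := by
      intro T hT
      rw [Finset.sum_biUnion]
      · exact Finset.sum_congr rfl (fun a ha => hxA a (hT ha))
      · intro a ha a' ha' hne'
        exact hfibdisj a (hT ha) a' (hT ha') hne'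
    -- feasibility
    have hfeas : (∑ e ∈ sup ∪ A, x e) ∈ {w : ℝ |
      ∃ x : Finset V → ℝ,
        (∀ e, 0 ≤ x e) ∧ (∀ e ∉ S.sup id ∪ A, x e = 0) ∧
        (∀ Si ∈ S, 1 ≤ ∑ e ∈ Si, x e) ∧
        (∀ u ∈ U, 1 ≤ ∑ e ∈ (S.sup id ∪ A).filter (u ∈ ·), x e) ∧
        w = ∑ e ∈ S.sup id ∪ A, x e} := by
      refine ⟨x, ?_, ?_, ?_, ?_, rfl⟩
      · -- nonneg
        intro e
        simp only [hxdef]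
        split
        · have := h0 e (hsupE ‹_›)
          linarith [hboost0 e]
        · split
          · exact Finset.sum_nonneg fun f hf => h0 f (hfibE _ hf)
          · exact le_rfl
      · intro e he
        rw [Finset.mem_union, not_or] at he
        simp only [hxdef, if_neg (show e ∉ sup from he.1), if_neg he.2]
      · -- constraints for Si
        intro Si hSi
        have hsub : Si ⊆ sup := hSisup Si hSi
        have hx : ∀ e ∈ Si, x e = γ e + boost e := fun e he => hxsup e (hsub he)
        rw [Finset.sum_congr rfl hx, Finset.sum_add_distrib]
        by_cases hd : ∑ e ∈ Si, γ e < 1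
        · have hmem : Si ∈ Sdef := by rw [hSdefdef, Finset.mem_filter]; exact ⟨hSi, hd⟩
          have h1 : boost (pick Si) ≤ ∑ e ∈ Si, boost e :=
            Finset.single_le_sum (fun e _ => hboost0 e) (hpick Si hSi)
          have h2 : 1 - ∑ f ∈ Si, γ f ≤ boost (pick Si) := by
            rw [hboostdef]
            refine Finset.single_le_sum (f := fun Sj => if pick Sj = pick Si then 1 - ∑ f ∈ Sj, γ f else 0) ?_ hmem |>.trans_eq' ?_
            · intro Sj hSj
              rw [hSdefdef, Finset.mem_filter] at hSj
              split <;> linarith [hSj.2]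
            · rw [if_pos rfl]
          linarith
        · push_neg at hd
          have : 0 ≤ ∑ e ∈ Si, boost e := Finset.sum_nonneg fun e _ => hboost0 e
          linarith
      · -- constraints for u ∈ U
        intro u hu
        have hB' : 1 ≤ ∑ e ∈ E.filter (u ∈ ·), γ e := by
          have := hU hu
          rw [hB, Finset.mem_filter] at this
          exact this.2
        rw [Finset.filter_union, Finset.sum_union (Finset.disjoint_filter_filter hdisj)]
        have hsplit : ∑ e ∈ E.filter (u ∈ ·), γ e
            = ∑ e ∈ (E.filter (u ∈ ·)).filter (· ∈ sup), γ e
              + ∑ e ∈ (E.filter (u ∈ ·)).filter (· ∉ sup), γ e :=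
          (Finset.sum_filter_add_sum_filter_not _ _ _).symm
        have h1 : ∑ e ∈ (E.filter (u ∈ ·)).filter (· ∈ sup), γ e
            ≤ ∑ e ∈ sup.filter (u ∈ ·), x e := by
          have heq : (E.filter (u ∈ ·)).filter (· ∈ sup) = sup.filter (u ∈ ·) := by
            ext e
            simp only [Finset.mem_filter]
            constructor
            · rintro ⟨⟨-, h2⟩, h3⟩; exact ⟨h3, h2⟩
            · rintro ⟨h2, h3⟩; exact ⟨⟨hsupE h2, h3⟩, h2⟩
          rw [heq]
          refine Finset.sum_le_sum ?_
          intro e he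
          rw [Finset.mem_filter] at he
          rw [hxsup e he.1]
          linarith [hboost0 e]
        have h2 : ∑ e ∈ (E.filter (u ∈ ·)).filter (· ∉ sup), γ e
            ≤ ∑ a ∈ A.filter (u ∈ ·), x a := by
          rw [hsumA _ (Finset.filter_subset _ _)]
          refine Finset.sum_le_sum_of_subset_of_nonneg ?_ ?_
          · intro e he
            simp only [Finset.mem_filter] at he
            obtain ⟨⟨heE, hue⟩, hes⟩ := he
            obtain ⟨a, haA, haU⟩ := hA3 e heE hes ⟨u, Finset.mem_inter.mpr ⟨hue, hu⟩⟩
            rw [Finset.mem_biUnion]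
            refine ⟨a, ?_, ?_⟩
            · rw [Finset.mem_filter]
              refine ⟨haA, ?_⟩
              have : u ∈ a ∩ U := haU ▸ Finset.mem_inter.mpr ⟨hue, hu⟩
              exact (Finset.mem_inter.mp this).1
            · rw [hfibdef, Finset.mem_filter]
              exact ⟨heE, hes, haU.symm⟩
          · intro e he _
            exact h0 e (by
              rw [Finset.mem_biUnion] at he
              obtain ⟨a, -, he⟩ := he
              exact hfibE a he)
        linarith
    have hle : opt ≤ ∑ e ∈ sup ∪ A, x e := hopt.1 hfeas
    -- bound the objective
    have hobj : ∑ e ∈ sup ∪ A, x e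
        ≤ (∑ e ∈ E, γ e) + ∑ Si ∈ Sdef, (1 - ∑ e ∈ Si, γ e) := by
      rw [Finset.sum_union hdisj]
      have hA' : ∑ a ∈ A, x a = ∑ e ∈ A.biUnion fib, γ e := hsumA A le_rfl
      have hsup' : ∑ e ∈ sup, x e = ∑ e ∈ sup, γ e + ∑ e ∈ sup, boost e := by
        rw [← Finset.sum_add_distrib]
        exact Finset.sum_congr rfl hxsup
      have hboostsum : ∑ e ∈ sup, boost e = ∑ Si ∈ Sdef, (1 - ∑ f ∈ Si, γ f) := by
        rw [hboostdef, Finset.sum_comm]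
        refine Finset.sum_congr rfl ?_
        intro Si hSi
        have hSiS : Si ∈ S := (Finset.mem_filter.mp (hSdefdef ▸ hSi)).1
        rw [Finset.sum_ite_eq (sup) (pick Si) (fun _ => 1 - ∑ f ∈ Si, γ f),
          if_pos (hSisup Si hSiS (hpick Si hSiS))]
      have hmain : ∑ e ∈ sup, γ e + ∑ e ∈ A.biUnion fib, γ e ≤ ∑ e ∈ E, γ e := by
        have hdisj2 : Disjoint sup (A.biUnion fib) := by
          rw [Finset.disjoint_right]
          intro e he
          rw [Finset.mem_biUnion] at he
          obtain ⟨a, -, he⟩ := he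
          rw [hfibdef, Finset.mem_filter] at he
          exact he.2.1
        rw [← Finset.sum_union hdisj2]
        refine Finset.sum_le_sum_of_subset_of_nonneg ?_ (fun e he _ => h0 e he)
        rw [Finset.union_subset_iff]
        exact ⟨hsupE, Finset.biUnion_subset.mpr fun a _ => hfibE a⟩
      linarith
    calc opt ≤ ∑ e ∈ sup ∪ A, x e := hle
      _ ≤ _ := hobj
  · -- degenerate case: some Si is empty, LP infeasible
    push_neg at hne
    obtain ⟨S0, hS0S, hS0⟩ := hne
    exfalso
    have h1 : opt + 1 ≤ opt := by
      refine hopt.2 ?_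
      rintro w ⟨x, -, -, h3, -, -⟩
      have h10 : (1:ℝ) ≤ 0 := by simpa [hS0] using h3 S0 hS0S
      linarith
    linarith
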